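/- For all natural numbers N, m, v with 1 ≤ m ≤ N − 2 and v ≥ 2, the following identity holds in ℚ: ∑_{i=m+1}^{N−1} 1/(v + i − 2) = ((v + N − 3)!/(v + m − 2)!) · ∑_{i=m+2}^{N} 1/((v + i − 3)² · ∏_{j=m+2, j≠i}^{N} (j − i)). -/

import Mathlib

open Finset

private lemma alt_shift (n : ℕ) (g : ℕ → ℚ) :
    ∑ k ∈ range (n+2), (-1:ℚ)^k * ((n+1).choose k) * g k
      = ∑ k ∈ range (n+1), (-1:ℚ)^k * (n.choose k) * g k
        - ∑ k ∈ range (n+1), (-1:ℚ)^k * (n.choose k) * g (k+1) := by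
  have e3 : ∑ k ∈ range (n+1), (-1:ℚ)^k * (n.choose (k+1)) * g (k+1)
      = g 0 - ∑ k ∈ range (n+1), (-1:ℚ)^k * (n.choose k) * g k := by
    rw [sum_range_succ, sum_range_succ' (fun k => (-1:ℚ)^k * (n.choose k) * g k) n]
    simp [Nat.choose_succ_self, pow_succ]
  have e2 : ∀ k ∈ range (n+1), (-1:ℚ)^(k+1) * (((n+1).choose (k+1) : ℕ) : ℚ) * g (k+1)
      = -((-1:ℚ)^k * (n.choose k) * g (k+1)) - (-1:ℚ)^k * (n.choose (k+1)) * g (k+1) := by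
    intro k _
    have h : (((n+1).choose (k+1) : ℕ) : ℚ) = (n.choose k : ℚ) + (n.choose (k+1) : ℚ) := by
      exact_mod_cast congrArg (Nat.cast (R := ℚ)) (Nat.choose_succ_succ n k)
    rw [h]; ring
  rw [sum_range_succ' (fun k => (-1:ℚ)^k * ((n+1).choose k) * g k) (n+1),
    sum_congr rfl e2, sum_sub_distrib, e3]
  simp
  ring

private lemma key (n : ℕ) : ∀ a : ℚ, 0 < a →
    ∑ k ∈ range (n+1), (-1:ℚ)^k * (n.choose k) * (1/(a+k)^2)
      = (n.factorial : ℚ) / (∏ l ∈ range (n+1), (a+l)) * ∑ l ∈ range (n+1), 1/(a+l) := by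
  induction n with
  | zero =>
    intro a ha
    simp [sq]
  | succ n ih =>
    intro a ha
    have hb : (0:ℚ) < a + 1 := by linarith
    have h1 := ih a ha
    have h2 := ih (a+1) hb
    have hshift := alt_shift n (fun k => 1/(a+(k:ℕ))^2)
    rw [hshift, h1]
    have eS2 : ∑ k ∈ range (n+1), (-1:ℚ)^k * (n.choose k) * (1/(a+((k+1:ℕ):ℚ))^2)
        = ∑ k ∈ range (n+1), (-1:ℚ)^k * (n.choose k) * (1/((a+1)+k)^2) := by
      apply sum_congr rfl; intro k _; push_cast; ring_nf
    rw [eS2, h2]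
    have hP : (0:ℚ) < ∏ l ∈ range (n+1), (a+l) := by
      apply prod_pos; intro l _; positivity
    have hR : (0:ℚ) < ∏ l ∈ range (n+1), ((a+1)+l) := by
      apply prod_pos; intro l _; positivity
    have hQ1 : ∏ l ∈ range (n+2), (a+(l:ℚ)) = (∏ l ∈ range (n+1), (a+l)) * (a+((n+1:ℕ):ℚ)) := by
      rw [prod_range_succ]
    have hQ2 : ∏ l ∈ range (n+2), (a+(l:ℚ)) = (∏ l ∈ range (n+1), ((a+1)+l)) * a := by
      rw [prod_range_succ' (fun l => a + (l:ℚ)) (n+1)]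
      congr 1
      · exact prod_congr rfl fun k _ => by push_cast; ring
      · simp
    have hH1 : ∑ l ∈ range (n+2), 1/(a+(l:ℚ))
        = ∑ l ∈ range (n+1), 1/(a+l) + 1/(a+((n+1:ℕ):ℚ)) := by
      rw [sum_range_succ]
    have hH2 : ∑ l ∈ range (n+2), 1/(a+(l:ℚ))
        = ∑ l ∈ range (n+1), 1/((a+1)+l) + 1/a := by
      rw [sum_range_succ' (fun l => 1/(a + (l:ℚ))) (n+1)]
      congr 1
      · exact sum_congr rfl fun k _ => by push_cast; ring_nf
      · simp
    set X := ∑ l ∈ range (n+2), 1/(a+(l:ℚ)) with hX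
    have g1 : ∑ l ∈ range (n+1), 1/(a+(l:ℚ)) = X - 1/(a+((n+1:ℕ):ℚ)) := by
      rw [hH1]; ring
    have g2 : ∑ l ∈ range (n+1), 1/((a+1)+(l:ℚ)) = X - 1/a := by
      rw [hH2]; ring
    have hc : (0:ℚ) < a+((n+1:ℕ):ℚ) := by positivity
    have hRR : (∏ l ∈ range (n+1), ((a+1)+(l:ℚ)))
        = (∏ l ∈ range (n+1), (a+(l:ℚ))) * (a+((n+1:ℕ):ℚ)) / a := by
      rw [eq_div_iff (ne_of_gt ha), ← hQ2, hQ1]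
    rw [g1, g2, hQ1, hRR, Nat.factorial_succ]
    push_cast
    field_simp
    ring

private lemma prod_left (k : ℕ) : ∏ j ∈ range k, ((j:ℚ) - k) = (-1)^k * k.factorial := by
  rw [← prod_range_reflect]
  have h : ∀ j ∈ range k, ((k - 1 - j : ℕ):ℚ) - k = -((j:ℚ)+1) := by
    intro j hj
    rw [mem_range] at hj
    have : (k - 1 - j : ℕ) = k - (j+1) := by omega
    rw [this, Nat.cast_sub (by omega)]
    push_cast
    ring
  rw [prod_congr rfl h]
  have : ∏ j ∈ range k, (-((j:ℚ)+1)) = (-1)^k * ∏ j ∈ range k, ((j:ℚ)+1) := by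
    rw [show ((-1:ℚ))^k = ∏ _j ∈ range k, (-1:ℚ) by simp, ← prod_mul_distrib]
    exact prod_congr rfl fun j _ => by ring
  rw [this]
  congr 1
  exact_mod_cast congrArg (Nat.cast (R := ℚ)) (Finset.prod_range_add_one_eq_factorial k)

private lemma erase_prod : ∀ n k : ℕ, k < n →
    ∏ j ∈ (range n).erase k, ((j:ℚ) - k) = (-1)^k * k.factorial * (n - 1 - k).factorial := by
  intro n
  induction n with
  | zero => omega
  | succ n ih =>
    intro k hk
    rcases Nat.lt_succ_iff_lt_or_eq.mp hk with h | h
    · have hset : (range (n+1)).erase k = insert n ((range n).erase k) := by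
        ext x; simp [mem_erase, mem_range]; omega
      rw [hset, prod_insert (by simp [mem_erase, mem_range])]
      rw [ih k h]
      have e1 : (n + 1 - 1 - k).factorial = (n - k) * (n - 1 - k).factorial := by
        have : n + 1 - 1 - k = (n - 1 - k) + 1 := by omega
        rw [this, Nat.factorial_succ]
        congr 1
        omega
      rw [e1]
      have : ((n:ℚ) - k) = ((n - k : ℕ):ℚ) := by
        rw [Nat.cast_sub h.le]
      rw [this]
      push_cast
      ring
    · subst h
      rw [range_add_one, erase_insert (by simp), prod_left]
      simp

private lemma fact_prod (c : ℕ) : ∀ n : ℕ,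
    ((c+n).factorial : ℚ) = (c.factorial : ℚ) * ∏ l ∈ range n, ((c:ℚ)+1+l) := by
  intro n
  induction n with
  | zero => simp
  | succ n ih =>
    have : c + (n+1) = (c+n) + 1 := by omega
    rw [this, Nat.factorial_succ, prod_range_succ]
    push_cast
    rw [ih]
    ring

theorem stmt19 (N m v : ℕ) (hm : 1 ≤ m) (hmN : m ≤ N - 2) (hv : 2 ≤ v) :
    ∑ i ∈ Icc (m + 1) (N - 1), (1 : ℚ) / ((v : ℚ) + (i : ℚ) - 2) =
      ((Nat.factorial (v + N - 3) : ℚ) / (Nat.factorial (v + m - 2) : ℚ)) *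
        ∑ i ∈ Icc (m + 2) N,
          (1 : ℚ) / (((v : ℚ) + (i : ℚ) - 3) ^ 2 *
            ∏ j ∈ (Icc (m + 2) N).erase i, ((j : ℚ) - (i : ℚ))) := by
  have hm2N : m + 2 ≤ N := by omega
  obtain ⟨n, hn⟩ : ∃ n, n = N - m - 1 := ⟨_, rfl⟩
  have hn1 : 1 ≤ n := by omega
  set a : ℚ := (v:ℚ) + m - 1 with hadef
  have hv' : (2:ℚ) ≤ (v:ℚ) := by exact_mod_cast hv
  have hm' : (1:ℚ) ≤ (m:ℚ) := by exact_mod_cast hm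
  have ha : 0 < a := by rw [hadef]; linarith
  -- LHS
  have e1 : ∑ i ∈ Icc (m + 1) (N - 1), (1 : ℚ) / ((v : ℚ) + (i : ℚ) - 2)
      = ∑ k ∈ range n, 1/(a + (k:ℚ)) := by
    have hmap1 : Icc (m+1) (N-1) = (range n).map ⟨fun k => m+1+k, add_right_injective _⟩ := by
      ext x; simp only [mem_map, mem_range, Function.Embedding.coeFn_mk, mem_Icc]
      constructor
      · rintro ⟨h1, h2⟩; exact ⟨x - m - 1, by omega, show m + 1 + (x - m - 1) = x by omega⟩
      · rintro ⟨y, hy, rfl⟩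
        show m + 1 ≤ m + 1 + y ∧ m + 1 + y ≤ N - 1
        omega
    rw [hmap1, sum_map]
    apply sum_congr rfl
    intro k _
    simp only [Function.Embedding.coeFn_mk]
    congr 1
    push_cast
    rw [hadef]
    ring
  rw [e1]
  -- RHS sum
  set e2 : ℕ ↪ ℕ := ⟨fun k => m+2+k, add_right_injective _⟩ with he2
  have hmap2 : Icc (m+2) N = (range n).map e2 := by
    ext x; simp only [mem_map, mem_range, he2, Function.Embedding.coeFn_mk, mem_Icc]
    constructor
    · rintro ⟨h1, h2⟩; exact ⟨x - m - 2, by omega, show m + 2 + (x - m - 2) = x by omega⟩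
    · rintro ⟨y, hy, rfl⟩
      show m + 2 ≤ m + 2 + y ∧ m + 2 + y ≤ N
      omega
  rw [hmap2, sum_map]
  have eRHS : ∀ k ∈ range n,
      (1 : ℚ) / (((v : ℚ) + ((e2 k : ℕ) : ℚ) - 3) ^ 2 *
        ∏ j ∈ ((range n).map e2).erase (e2 k), ((j : ℚ) - ((e2 k : ℕ) : ℚ)))
      = 1 / ((a + (k:ℚ))^2 * ((-1)^k * (k.factorial : ℚ) * ((n - 1 - k).factorial : ℚ))) := by
    intro k hk
    rw [mem_range] at hk
    rw [← map_erase, prod_map]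
    have hprod : ∏ j ∈ (range n).erase k, (((e2 j : ℕ):ℚ) - ((e2 k : ℕ):ℚ))
        = ∏ j ∈ (range n).erase k, ((j:ℚ) - (k:ℚ)) := by
      apply prod_congr rfl
      intro j _
      simp only [he2, Function.Embedding.coeFn_mk]
      push_cast
      ring
    rw [hprod, erase_prod n k hk]
    congr 2
    simp only [he2, Function.Embedding.coeFn_mk]
    push_cast
    rw [hadef]
    ring
  rw [sum_congr rfl eRHS]
  -- factorial ratio
  have hfr : ((Nat.factorial (v + N - 3) : ℚ) / (Nat.factorial (v + m - 2) : ℚ))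
      = ∏ l ∈ range n, (a + (l:ℚ)) := by
    have hc : v + N - 3 = (v + m - 2) + n := by omega
    rw [hc, fact_prod (v+m-2) n]
    rw [mul_comm, mul_div_assoc, div_self (by positivity), mul_one]
    apply prod_congr rfl
    intro l _
    have : ((v + m - 2 : ℕ):ℚ) = (v:ℚ) + m - 2 := by
      rw [Nat.cast_sub (by omega)]; push_cast; ring
    rw [this, hadef]; ring
  rw [hfr]
  -- apply key
  obtain ⟨n', rfl⟩ : ∃ n', n = n' + 1 := ⟨n - 1, by omega⟩
  have hkey := key n' a ha
  have hP : (0:ℚ) < ∏ l ∈ range (n'+1), (a + (l:ℚ)) := by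
    apply prod_pos; intro l _; positivity
  have eterm : ∀ k ∈ range (n'+1),
      1 / ((a + (k:ℚ))^2 * ((-1)^k * (k.factorial : ℚ) * ((n' + 1 - 1 - k).factorial : ℚ)))
      = (1/(n'.factorial : ℚ)) * ((-1:ℚ)^k * (n'.choose k : ℚ) * (1/(a + (k:ℚ))^2)) := by
    intro k hk
    rw [mem_range] at hk
    have hk' : k ≤ n' := by omega
    have hck : (n'.choose k : ℚ) * (k.factorial : ℚ) * ((n'-k).factorial : ℚ) = (n'.factorial : ℚ) := by
      exact_mod_cast Nat.choose_mul_factorial_mul_factorial hk'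
    have hs : n' + 1 - 1 - k = n' - k := by omega
    rw [hs]
    have hneg : ((-1:ℚ)^k) * ((-1:ℚ)^k) = 1 := by
      rw [← pow_add, ← two_mul, pow_mul]; norm_num
    have h1 : (a + (k:ℚ)) ≠ 0 := by positivity
    have h2 : (k.factorial : ℚ) ≠ 0 := by positivity
    have h3 : ((n'-k).factorial : ℚ) ≠ 0 := by positivity
    have h4 : (n'.factorial : ℚ) ≠ 0 := by positivity
    have h5 : ((-1:ℚ)^k) ≠ 0 := by
      intro h; rw [h] at hneg; simp at hneg
    have key2 : ((-1:ℚ)^k * (k.factorial:ℚ) * ((n'-k).factorial:ℚ)) * ((-1:ℚ)^k * (n'.choose k : ℚ))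
        = (n'.factorial:ℚ) := by
      linear_combination ((k.factorial:ℚ) * ((n'-k).factorial:ℚ) * (n'.choose k : ℚ)) * hneg + hck
    rw [← key2]
    have h6 : ((-1:ℚ)^k * (n'.choose k : ℚ)) ≠ 0 := by
      apply mul_ne_zero h5
      have : 0 < n'.choose k := Nat.choose_pos hk'
      positivity
    have h7 : (n'.choose k : ℚ) ≠ 0 := by exact_mod_cast (Nat.choose_pos hk').ne'
    field_simp
  rw [sum_congr rfl eterm, ← mul_sum, hkey]
  have h4 : (n'.factorial : ℚ) ≠ 0 := by positivity
  field_simp
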